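/- The element vol₃^{•2} ∈ ℝ⟨1,2,3⟩ vanishes on all piecewise linear paths with at most 5 control points (i.e., at most 4 segments): ⟨S(X), vol₃^{•2}⟩ = 0 whenever X is piecewise linear with at most 4 linear segments in ℝ³. -/

import Mathlib

open MeasureTheory

noncomputable section

/-- Iterated-integral signature of a path `X` (restricted to `[0,1]`) at a word:
`∫_{0 ≤ t₁ ≤ ⋯ ≤ t_k ≤ 1} X'_{i₁}(t₁) ⋯ X'_{i_k}(t_k) dt`. -/
def sig {d : ℕ} (X : ℝ → Fin d → ℝ) (w : List (Fin d)) : ℝ :=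
  ∫ t in {t : Fin w.length → ℝ | (∀ i, t i ∈ Set.Icc (0:ℝ) 1) ∧ Monotone t},
    ∏ i : Fin w.length, deriv (fun s => X s (w.get i)) (t i)

/-- The piecewise linear path with control points `x 0 → x 1 → ⋯ → x n`,
parametrized uniformly on `[0,1]`. -/
def pwl {d n : ℕ} (x : Fin (n + 1) → Fin d → ℝ) (t : ℝ) : Fin d → ℝ := fun j =>
  if t ≤ 0 then x 0 j
  else if 1 ≤ t then x (Fin.last n) j
  else
    let i : ℕ := ⌊t * (n : ℝ)⌋.toNat
    x ⟨min i n, Nat.lt_succ_of_le (min_le_right _ _)⟩ j +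
      (t * (n : ℝ) - (i : ℝ)) *
        (x ⟨min (i + 1) n, Nat.lt_succ_of_le (min_le_right _ _)⟩ j -
          x ⟨min i n, Nat.lt_succ_of_le (min_le_right _ _)⟩ j)

/-- The free associative algebra `ℝ⟨1,…,d⟩` with words as basis. -/
abbrev FreeTensor (d : ℕ) := MonoidAlgebra ℝ (FreeMonoid (Fin d))

/-- Pairing `⟨S(X), p⟩` of the signature of a path with an element of `ℝ⟨1,…,d⟩`. -/
noncomputable def sigPair {d : ℕ} (X : ℝ → Fin d → ℝ) (p : FreeTensor d) : ℝ :=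
  p.coeff.sum fun w c => c * sig X (FreeMonoid.toList w)

/-- Shuffle product of two words, as an element of `ℝ⟨1,…,d⟩`. -/
noncomputable def shW {d : ℕ} : List (Fin d) → List (Fin d) → FreeTensor d
  | [], v => MonoidAlgebra.ofCoeff (Finsupp.single (FreeMonoid.ofList v) 1)
  | a :: u, [] => MonoidAlgebra.ofCoeff (Finsupp.single (FreeMonoid.ofList (a :: u)) 1)
  | a :: u, b :: v =>
      MonoidAlgebra.ofCoeff (Finsupp.mapDomain (fun m => FreeMonoid.of a * m) (shW u (b :: v)).coeff) +
        MonoidAlgebra.ofCoeff (Finsupp.mapDomain (fun m => FreeMonoid.of b * m) (shW (a :: u) v).coeff)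
  termination_by u v => u.length + v.length

/-- The shuffle product `⧢` on `ℝ⟨1,…,d⟩`, extended bilinearly from words. -/
noncomputable def shuffle {d : ℕ} (p q : FreeTensor d) : FreeTensor d :=
  p.coeff.sum fun u a => q.coeff.sum fun v b => (a * b) • shW (FreeMonoid.toList u) (FreeMonoid.toList v)

/-- The antipode, sending a word of length `k` to `(−1)^k` times its reversal. -/
noncomputable def antipode {d : ℕ} (p : FreeTensor d) : FreeTensor d :=
  p.coeff.sum fun w c =>
    MonoidAlgebra.ofCoeff (Finsupp.single (FreeMonoid.ofList (FreeMonoid.toList w).reverse)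
      ((-1 : ℝ) ^ (FreeMonoid.toList w).length * c))

/-- The signed-volume element `vol_d = Σ_{σ ∈ S_d} sgn(σ) σ(1)⋯σ(d)`. -/
noncomputable def volElt (d : ℕ) : FreeTensor d :=
  ∑ σ : Equiv.Perm (Fin d),
    ((Equiv.Perm.sign σ : ℤ) : ℝ) •
      MonoidAlgebra.ofCoeff (Finsupp.single (FreeMonoid.ofList (List.ofFn fun i => σ i)) (1 : ℝ))

namespace Vol3Aux


/-- segment interval -/
def seg (n : ℕ) (k : Fin n) : Set ℝ := Set.Ioo ((k:ℝ)/n) (((k:ℝ)+1)/n)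

/-- segment velocity -/
def vel {d n : ℕ} (x : Fin (n + 1) → Fin d → ℝ) (k : Fin n) (j : Fin d) : ℝ :=
  (n : ℝ) * (x k.succ j - x k.castSucc j)

theorem deriv_pwl {d n : ℕ} (hn : 0 < n) (x : Fin (n + 1) → Fin d → ℝ) (j : Fin d)
    (t : ℝ) (ht : t ∉ Set.range (fun q : ℕ => (q : ℝ) / n)) :
    deriv (fun s => pwl x s j) t = ∑ k : Fin n, (seg n k).indicator (fun _ => vel x k j) t := by
  have hn' : (0:ℝ) < n := by exact_mod_cast hn
  have ht0 : t ≠ 0 := by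
    intro h; exact ht ⟨0, by simp [h]⟩
  have ht1 : t ≠ 1 := by
    intro h; exact ht ⟨n, by beta_reduce; rw [h, div_self hn'.ne']⟩
  rcases lt_trichotomy t 0 with hlt | heq | hgt
  · -- t < 0 : locally constant
    have hev : (fun s => pwl x s j) =ᶠ[nhds t] fun _ => x 0 j := by
      filter_upwards [Iio_mem_nhds hlt] with s hs
      simp [pwl, (Set.mem_Iio.mp hs).le]
    rw [hev.deriv_eq, deriv_const]
    symm
    apply Finset.sum_eq_zero
    intro k _
    apply Set.indicator_of_notMem
    intro hmem
    have : (0:ℝ) ≤ (k:ℝ)/n := by positivity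
    exact absurd hmem.1 (by linarith)
  · exact absurd heq ht0
  · rcases lt_trichotomy t 1 with hlt1 | heq1 | hgt1
    · -- 0 < t < 1
      set k0 : ℕ := ⌊t * (n:ℝ)⌋.toNat with hk0def
      have htn0 : 0 < t * n := by positivity
      have hfloor_nonneg : 0 ≤ ⌊t * (n:ℝ)⌋ := Int.floor_nonneg.2 htn0.le
      have hcast : (k0 : ℝ) = (⌊t * (n:ℝ)⌋ : ℝ) := by
        rw [hk0def]; exact_mod_cast congrArg Int.cast (Int.toNat_of_nonneg hfloor_nonneg)
      have hle : (k0 : ℝ) ≤ t * n := by rw [hcast]; exact Int.floor_le _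
      have hlt' : t * n < (k0 : ℝ) + 1 := by rw [hcast]; exact Int.lt_floor_add_one _
      have hne : (k0 : ℝ) ≠ t * n := by
        intro h
        exact ht ⟨k0, by beta_reduce; rw [h, mul_div_cancel_right₀ _ hn'.ne']⟩
      have hklt : (k0 : ℝ) < t * n := lt_of_le_of_ne hle hne
      have hk0n : k0 < n := by
        have : (k0 : ℝ) < n := lt_of_lt_of_le hklt (by nlinarith)
        exact_mod_cast this
      have h1 : (k0 : ℝ)/n < t := (div_lt_iff₀ hn').2 (by linarith)
      have h2 : t < ((k0 : ℝ)+1)/n := (lt_div_iff₀ hn').2 (by linarith)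
      have hk1n : k0 + 1 ≤ n := hk0n
      set A := x (Fin.castSucc ⟨k0, hk0n⟩) j with hA
      set C := x (Fin.succ ⟨k0, hk0n⟩) j - x (Fin.castSucc ⟨k0, hk0n⟩) j with hC
      have hev : (fun s => pwl x s j) =ᶠ[nhds t]
          fun s => A + (s * (n:ℝ) - (k0:ℝ)) * C := by
        filter_upwards [isOpen_Ioo.mem_nhds (Set.mem_Ioo.2 ⟨h1, h2⟩)] with s hs
        obtain ⟨hs1, hs2⟩ := hs
        have hs0 : 0 < s := lt_of_le_of_lt (by positivity) hs1
        have hsn1 : (k0:ℝ) < s * n := (div_lt_iff₀ hn').1 hs1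
        have hsn2 : s * n < (k0:ℝ) + 1 := (lt_div_iff₀ hn').1 hs2
        have hs1' : s < 1 := by
          calc s < ((k0:ℝ)+1)/n := hs2
          _ ≤ 1 := by
            rw [div_le_one hn']
            exact_mod_cast hk1n
        have hfl : ⌊s * (n:ℝ)⌋ = (k0 : ℤ) := by
          rw [Int.floor_eq_iff]
          constructor
          · exact_mod_cast hsn1.le
          · push_cast; exact hsn2
        simp only [pwl, not_le.2 hs0, if_false, not_le.2 hs1', if_false]
        simp only [hfl, Int.toNat_natCast]
        have e1 : (⟨k0 ⊓ n, Nat.lt_succ_of_le (min_le_right _ _)⟩ : Fin (n+1)) =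
            (⟨k0, hk0n⟩ : Fin n).castSucc := Fin.ext (min_eq_left hk0n.le)
        have e2 : (⟨(k0+1) ⊓ n, Nat.lt_succ_of_le (min_le_right _ _)⟩ : Fin (n+1)) =
            (⟨k0, hk0n⟩ : Fin n).succ := Fin.ext (min_eq_left hk1n)
        rw [e1, e2]
      rw [hev.deriv_eq]
      have hd : HasDerivAt (fun s : ℝ => A + (s * (n:ℝ) - (k0:ℝ)) * C) ((n:ℝ) * C) t := by
        have h := (((hasDerivAt_id t).mul_const (n:ℝ)).sub_const (k0:ℝ)).mul_const C
        simpa using h.const_add A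
      rw [hd.deriv]
      symm
      rw [Finset.sum_eq_single_of_mem (⟨k0, hk0n⟩ : Fin n) (Finset.mem_univ _)]
      · have hmem : t ∈ seg n ⟨k0, hk0n⟩ := by
          simp only [seg, Set.mem_Ioo]
          exact ⟨h1, h2⟩
        rw [Set.indicator_of_mem hmem]
        rfl
      · intro b _ hb
        apply Set.indicator_of_notMem
        intro hmem
        simp only [seg, Set.mem_Ioo] at hmem
        obtain ⟨hb1, hb2⟩ := hmem
        have hbne : (b : ℕ) ≠ k0 := fun h => hb (Fin.ext h)
        rcases lt_or_gt_of_ne hbne with hbk | hbk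
        · -- b < k0 : t < (b+1)/n ≤ k0/n < t
          have hc : ((b:ℝ)+1) ≤ (k0:ℝ) := by exact_mod_cast hbk
          have : ((b:ℝ)+1)/n ≤ (k0:ℝ)/n := by gcongr
          linarith
        · -- k0 < b : t < (k0+1)/n ≤ b/n < t
          have hc : ((k0:ℝ)+1) ≤ (b:ℝ) := by exact_mod_cast hbk
          have : ((k0:ℝ)+1)/n ≤ (b:ℝ)/n := by gcongr
          linarith
    · exact absurd heq1 ht1
    · -- t > 1
      have hev : (fun s => pwl x s j) =ᶠ[nhds t] fun _ => x (Fin.last n) j := by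
        filter_upwards [Ioi_mem_nhds hgt1] with s hs
        have : ¬ s ≤ 0 := by simp at hs ⊢; linarith
        simp [pwl, this, (Set.mem_Ioi.mp hs).le]
      rw [hev.deriv_eq, deriv_const]
      symm
      apply Finset.sum_eq_zero
      intro k _
      apply Set.indicator_of_notMem
      intro hmem
      have hk : (k:ℕ) + 1 ≤ n := k.2
      have : ((k:ℝ)+1)/n ≤ 1 := by
        rw [div_le_one hn']
        exact_mod_cast hk
      exact absurd hmem.2 (by linarith)





def simplexSet (m : ℕ) : Set (Fin m → ℝ) :=
  {t | (∀ i, t i ∈ Set.Icc (0:ℝ) 1) ∧ Monotone t}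

theorem measurableSet_simplexSet (m : ℕ) : MeasurableSet (simplexSet m) := by
  have : simplexSet m =
      (⋂ i, (fun t : Fin m → ℝ => t i) ⁻¹' Set.Icc (0:ℝ) 1) ∩
        ⋂ (i : Fin m) (j : Fin m), {t : Fin m → ℝ | i ≤ j → t i ≤ t j} := by
    ext t
    simp only [simplexSet, Set.mem_setOf_eq, Set.mem_inter_iff, Set.mem_iInter,
      Set.mem_preimage, Monotone]
    try tauto
  rw [this]
  apply MeasurableSet.inter
  · exact MeasurableSet.iInter fun i => (measurable_pi_apply i) measurableSet_Icc
  · refine MeasurableSet.iInter fun i => MeasurableSet.iInter fun j => ?_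
    by_cases h : i ≤ j
    · have : {t : Fin m → ℝ | i ≤ j → t i ≤ t j} = {t : Fin m → ℝ | t i ≤ t j} := by
        ext t; simp [h]
      rw [this]
      exact measurableSet_le (measurable_pi_apply i) (measurable_pi_apply j)
    · have : {t : Fin m → ℝ | i ≤ j → t i ≤ t j} = Set.univ := by
        ext t; simp [h]
      rw [this]
      exact MeasurableSet.univ

def box (n m : ℕ) (k : Fin m → Fin n) : Set (Fin m → ℝ) :=
  Set.univ.pi fun i => seg n (k i)

theorem measurableSet_box (n m : ℕ) (k : Fin m → Fin n) : MeasurableSet (box n m k) :=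
  MeasurableSet.univ_pi fun _ => measurableSet_Ioo

theorem volume_box_lt_top (n m : ℕ) (k : Fin m → Fin n) : volume (box n m k) < ⊤ := by
  rw [box, volume_pi_pi]
  exact ENNReal.prod_lt_top fun i _ => by simp [seg, Real.volume_Ioo]

/-- The coefficient: volume of simplex ∩ box. -/
def coeff (n m : ℕ) (k : Fin m → Fin n) : ℝ :=
  (volume (simplexSet m ∩ box n m k)).toReal

theorem prod_indicator {m : ℕ} (t : Fin m → ℝ) (A : Fin m → Set ℝ) (c : Fin m → ℝ) :
    (∏ i, (A i).indicator (fun _ => c i) (t i)) =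
      (Set.univ.pi A).indicator (fun _ => ∏ i, c i) t := by
  by_cases h : t ∈ Set.univ.pi A
  · rw [Set.indicator_of_mem h]
    exact Finset.prod_congr rfl fun i _ => Set.indicator_of_mem (h i trivial) _
  · rw [Set.indicator_of_notMem h]
    rw [Set.mem_univ_pi, not_forall] at h
    obtain ⟨i, hi⟩ := h
    exact Finset.prod_eq_zero (Finset.mem_univ i) (Set.indicator_of_notMem hi _)

theorem sig_pwl {d n : ℕ} (hn : 0 < n) (x : Fin (n + 1) → Fin d → ℝ) (w : List (Fin d)) :
    sig (pwl x) w =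
      ∑ k : Fin w.length → Fin n,
        coeff n w.length k * ∏ i, vel x (k i) (w.get i) := by
  set m := w.length with hm
  rw [sig]
  change (∫ t in simplexSet m, ∏ i : Fin m, deriv (fun s => pwl x s (w.get i)) (t i)) = _
  have hS : MeasurableSet (simplexSet m) := measurableSet_simplexSet m
  have hae : ∀ᵐ t : Fin m → ℝ, ∀ i : Fin m, t i ∉ Set.range (fun q : ℕ => (q:ℝ)/n) := by
    rw [ae_all_iff]
    intro i
    have hz : volume {t : Fin m → ℝ | t i ∈ Set.range (fun q : ℕ => (q:ℝ)/n)} = 0 := by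
      have he : {t : Fin m → ℝ | t i ∈ Set.range fun q : ℕ => (q:ℝ)/n} =
          ⋃ q : ℕ, {t : Fin m → ℝ | t i = (q:ℝ)/n} := by
        ext t; simp [Set.mem_setOf_eq, eq_comm]
      rw [he]
      refine measure_iUnion_null fun q => ?_
      rw [volume_pi]
      exact MeasureTheory.Measure.pi_hyperplane (fun _ : Fin m => (volume : Measure ℝ)) i ((q:ℝ)/n)
    exact measure_eq_zero_iff_ae_notMem.mp hz
  have step1 :
      (∫ t in simplexSet m, ∏ i : Fin m, deriv (fun s => pwl x s (w.get i)) (t i)) =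
      ∫ t in simplexSet m, ∑ k : Fin m → Fin n,
        (box n m k).indicator (fun _ => ∏ i, vel x (k i) (w.get i)) t := by
    apply setIntegral_congr_ae hS
    filter_upwards [hae] with t ht _
    have h1 : (∏ i : Fin m, deriv (fun s => pwl x s (w.get i)) (t i)) =
        ∏ i : Fin m, ∑ k : Fin n, (seg n k).indicator (fun _ => vel x k (w.get i)) (t i) :=
      Finset.prod_congr rfl fun i _ => deriv_pwl hn x (w.get i) (t i) (ht i)
    rw [h1, Finset.prod_univ_sum]
    rw [Fintype.piFinset_univ]
    exact Finset.sum_congr rfl fun k _ => prod_indicator t _ _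
  rw [step1, integral_finset_sum]
  · refine Finset.sum_congr rfl fun k _ => ?_
    rw [setIntegral_indicator (measurableSet_box n m k), setIntegral_const, measureReal_def, coeff,
      smul_eq_mul]
  · intro k _
    have : Integrable ((box n m k).indicator fun _ : Fin m → ℝ =>
        ∏ i, vel x (k i) (w.get i)) volume := by
      rw [integrable_indicator_iff (measurableSet_box n m k)]
      exact integrableOn_const (volume_box_lt_top n m k).ne
    exact this.restrict





theorem sigPair_add {d : ℕ} (X : ℝ → Fin d → ℝ) (p q : FreeTensor d) :
    sigPair X (p + q) = sigPair X p + sigPair X q := by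
  unfold sigPair; rw [MonoidAlgebra.coeff_add]
  exact Finsupp.sum_add_index' (fun w => zero_mul _) (fun w b₁ b₂ => add_mul _ _ _)

/-- sigPair as an AddMonoidHom in the tensor argument. -/
def sigPairHom {d : ℕ} (X : ℝ → Fin d → ℝ) : FreeTensor d →+ ℝ where
  toFun := sigPair X
  map_zero' := by
    show sigPair X 0 = 0
    unfold sigPair; rw [MonoidAlgebra.coeff_zero]
    exact Finsupp.sum_zero_index
  map_add' := sigPair_add X

theorem sigPair_single {d : ℕ} (X : ℝ → Fin d → ℝ) (u : FreeMonoid (Fin d)) (c : ℝ) :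
    sigPair X (MonoidAlgebra.single u c) = c * sig X (FreeMonoid.toList u) := by
  unfold sigPair; rw [MonoidAlgebra.coeff_single]
  exact Finsupp.sum_single_index (zero_mul _)

theorem word_eq (σ : Equiv.Perm (Fin 3)) :
    (List.ofFn fun i => σ i) = [σ 0, σ 1, σ 2] := by
  simp [List.ofFn_succ]

theorem sigPair_volsq {X : ℝ → Fin 3 → ℝ} :
    sigPair X (volElt 3 * volElt 3) =
      ∑ σ : Equiv.Perm (Fin 3), ∑ τ : Equiv.Perm (Fin 3),
        ((Equiv.Perm.sign σ : ℤ) : ℝ) * ((Equiv.Perm.sign τ : ℤ) : ℝ) *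
          sig X [σ 0, σ 1, σ 2, τ 0, τ 1, τ 2] := by
  have h0 : sigPair X (volElt 3 * volElt 3) = sigPairHom X (volElt 3 * volElt 3) := rfl
  rw [h0, volElt, Finset.sum_mul_sum, map_sum (sigPairHom X)]
  refine Finset.sum_congr rfl fun σ _ => ?_
  rw [map_sum (sigPairHom X)]
  refine Finset.sum_congr rfl fun τ _ => ?_
  rw [MonoidAlgebra.ofCoeff_single, MonoidAlgebra.ofCoeff_single, smul_mul_smul, MonoidAlgebra.single_mul_single, mul_one]
  have h1 : (FreeMonoid.ofList (List.ofFn fun i => σ i)) * (FreeMonoid.ofList (List.ofFn fun i => τ i)) =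
      FreeMonoid.ofList [σ 0, σ 1, σ 2, τ 0, τ 1, τ 2] := by
    rw [word_eq σ, word_eq τ]
    rfl
  rw [h1]
  rw [show (((Equiv.Perm.sign σ : ℤ):ℝ) * ((Equiv.Perm.sign τ : ℤ):ℝ)) •
      MonoidAlgebra.single (FreeMonoid.ofList [σ 0, σ 1, σ 2, τ 0, τ 1, τ 2]) (1:ℝ) =
      MonoidAlgebra.single (FreeMonoid.ofList [σ 0, σ 1, σ 2, τ 0, τ 1, τ 2])
        (((Equiv.Perm.sign σ : ℤ):ℝ) * ((Equiv.Perm.sign τ : ℤ):ℝ)) from by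
    rw [MonoidAlgebra.smul_single', mul_one]]
  show sigPair X _ = _
  rw [sigPair_single]
  rfl



theorem coeff_eq_zero {n m : ℕ} (k : Fin m → Fin n) (i j : Fin m) (hij : i ≤ j)
    (h : (k j : ℕ) < (k i : ℕ)) : coeff n m k = 0 := by
  have hn' : (0:ℝ) < n := by
    have := (k i).pos
    exact_mod_cast this
  have hempty : simplexSet m ∩ box n m k = ∅ := by
    ext t
    simp only [Set.mem_inter_iff, Set.mem_empty_iff_false, iff_false, not_and]
    rintro ⟨_, hmono⟩ hbox
    have h1 : t i ∈ seg n (k i) := hbox i trivial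
    have h2 : t j ∈ seg n (k j) := hbox j trivial
    simp only [seg, Set.mem_Ioo] at h1 h2
    have hmn : t i ≤ t j := hmono hij
    have hc : ((k j : ℝ) + 1) ≤ (k i : ℝ) := by exact_mod_cast h
    have : ((k j : ℝ) + 1)/n ≤ (k i : ℝ)/n := by gcongr
    linarith [h1.1, h2.2]
  rw [coeff, hempty]
  simp

/-- "determinant" of three segment velocities. -/
def detv {n : ℕ} (x : Fin (n + 1) → Fin 3 → ℝ) (a b c : Fin n) : ℝ :=
  ∑ σ : Equiv.Perm (Fin 3), ((Equiv.Perm.sign σ : ℤ) : ℝ) *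
    (vel x a (σ 0) * vel x b (σ 1) * vel x c (σ 2))

theorem detv_eq_det {n : ℕ} (x : Fin (n + 1) → Fin 3 → ℝ) (a b c : Fin n) :
    detv x a b c = Matrix.det (Matrix.of fun p q : Fin 3 => vel x (![a, b, c] q) p) := by
  rw [Matrix.det_apply]
  refine Finset.sum_congr rfl fun σ _ => ?_
  rw [Fin.prod_univ_three]
  simp [Units.smul_def, zsmul_eq_mul]

theorem detv_zero₁ {n : ℕ} (x : Fin (n + 1) → Fin 3 → ℝ) {a b : Fin n} (c : Fin n)
    (h : a = b) : detv x a b c = 0 := by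
  rw [detv_eq_det]
  refine Matrix.det_zero_of_column_eq (show (0 : Fin 3) ≠ 1 by decide) fun p => ?_
  simp [h]

theorem detv_zero₂ {n : ℕ} (x : Fin (n + 1) → Fin 3 → ℝ) (a : Fin n) {b c : Fin n}
    (h : b = c) : detv x a b c = 0 := by
  rw [detv_eq_det]
  refine Matrix.det_zero_of_column_eq (show (1 : Fin 3) ≠ 2 by decide) fun p => ?_
  simp [h]

theorem sig_word {n : ℕ} (hn : 0 < n) (x : Fin (n + 1) → Fin 3 → ℝ)
    (σ τ : Equiv.Perm (Fin 3)) :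
    sig (pwl x) [σ 0, σ 1, σ 2, τ 0, τ 1, τ 2] =
      ∑ k : Fin 6 → Fin n, coeff n 6 k *
        (vel x (k 0) (σ 0) * vel x (k 1) (σ 1) * vel x (k 2) (σ 2) *
          (vel x (k 3) (τ 0) * vel x (k 4) (τ 1) * vel x (k 5) (τ 2))) := by
  rw [sig_pwl hn]
  show (∑ k : Fin 6 → Fin n, coeff n 6 k *
      ∏ i : Fin 6, vel x (k i) (([σ 0, σ 1, σ 2, τ 0, τ 1, τ 2] : List (Fin 3)).get i)) = _
  refine Finset.sum_congr rfl fun k _ => ?_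
  congr 1
  rw [Fin.prod_univ_six]
  show vel x (k 0) (σ 0) * vel x (k 1) (σ 1) * vel x (k 2) (σ 2) * vel x (k 3) (τ 0) *
      vel x (k 4) (τ 1) * vel x (k 5) (τ 2) = _
  ring

theorem sig_word_zero (x : Fin 1 → Fin 3 → ℝ) (σ τ : Equiv.Perm (Fin 3)) :
    sig (pwl (n := 0) x) [σ 0, σ 1, σ 2, τ 0, τ 1, τ 2] = 0 := by
  have hconst : ∀ j, (fun s => pwl (n := 0) x s j) = fun _ => x 0 j := by
    intro j
    funext s
    simp only [pwl]
    split
    · rfl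
    · split
      · congr 1
      · norm_num
  rw [sig]
  show (∫ t in {t : Fin 6 → ℝ | (∀ i, t i ∈ Set.Icc (0:ℝ) 1) ∧ Monotone t},
      ∏ i : Fin 6, deriv (fun s => pwl (n := 0) x s
        (([σ 0, σ 1, σ 2, τ 0, τ 1, τ 2] : List (Fin 3)).get i)) (t i)) = 0
  have : ∀ t : Fin 6 → ℝ,
      (∏ i : Fin 6, deriv (fun s => pwl (n := 0) x s (([σ 0, σ 1, σ 2, τ 0, τ 1, τ 2] : List (Fin 3)).get i)) (t i)) = 0 := by
    intro t
    apply Finset.prod_eq_zero (Finset.mem_univ (0 : Fin 6))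
    rw [hconst, deriv_const]
  rw [show (∫ t in {t : Fin 6 → ℝ | (∀ i, t i ∈ Set.Icc (0:ℝ) 1) ∧ Monotone t},
      ∏ i : Fin 6, deriv (fun s => pwl (n := 0) x s (([σ 0, σ 1, σ 2, τ 0, τ 1, τ 2] : List (Fin 3)).get i)) (t i)) =
      ∫ _ in {t : Fin 6 → ℝ | (∀ i, t i ∈ Set.Icc (0:ℝ) 1) ∧ Monotone t}, (0:ℝ) from by
    exact integral_congr_ae (Filter.Eventually.of_forall fun t => this t)]
  simp



end Vol3Aux

open Vol3Aux in
theorem vol3_concat_sq_vanishes_on_short_paths :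
    ∀ n : ℕ, n + 1 ≤ 5 → ∀ x : Fin (n + 1) → Fin 3 → ℝ,
      sigPair (pwl x) (volElt 3 * volElt 3) = 0 := by
  intro n hn x
  rw [sigPair_volsq]
  rcases Nat.eq_zero_or_pos n with h0 | hpos
  · subst h0
    refine Finset.sum_eq_zero fun σ _ => Finset.sum_eq_zero fun τ _ => ?_
    rw [sig_word_zero x σ τ, mul_zero]
  · have hn4 : n ≤ 4 := by omega
    have key : ∀ σ τ : Equiv.Perm (Fin 3),
        ((Equiv.Perm.sign σ : ℤ) : ℝ) * ((Equiv.Perm.sign τ : ℤ) : ℝ) *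
          sig (pwl x) [σ 0, σ 1, σ 2, τ 0, τ 1, τ 2] =
        ∑ k : Fin 6 → Fin n, coeff n 6 k *
          ((((Equiv.Perm.sign σ : ℤ) : ℝ) *
              (vel x (k 0) (σ 0) * vel x (k 1) (σ 1) * vel x (k 2) (σ 2))) *
           (((Equiv.Perm.sign τ : ℤ) : ℝ) *
              (vel x (k 3) (τ 0) * vel x (k 4) (τ 1) * vel x (k 5) (τ 2)))) := by
      intro σ τ
      rw [sig_word hpos x σ τ, Finset.mul_sum]
      exact Finset.sum_congr rfl fun k _ => by ring
    simp_rw [key]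
    rw [show (∑ σ : Equiv.Perm (Fin 3), ∑ τ : Equiv.Perm (Fin 3), ∑ k : Fin 6 → Fin n,
        coeff n 6 k *
          ((((Equiv.Perm.sign σ : ℤ) : ℝ) *
              (vel x (k 0) (σ 0) * vel x (k 1) (σ 1) * vel x (k 2) (σ 2))) *
           (((Equiv.Perm.sign τ : ℤ) : ℝ) *
              (vel x (k 3) (τ 0) * vel x (k 4) (τ 1) * vel x (k 5) (τ 2))))) =
        ∑ k : Fin 6 → Fin n, ∑ σ : Equiv.Perm (Fin 3), ∑ τ : Equiv.Perm (Fin 3),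
        coeff n 6 k *
          ((((Equiv.Perm.sign σ : ℤ) : ℝ) *
              (vel x (k 0) (σ 0) * vel x (k 1) (σ 1) * vel x (k 2) (σ 2))) *
           (((Equiv.Perm.sign τ : ℤ) : ℝ) *
              (vel x (k 3) (τ 0) * vel x (k 4) (τ 1) * vel x (k 5) (τ 2)))) from by
      rw [show ∀ g : Equiv.Perm (Fin 3) → Equiv.Perm (Fin 3) → (Fin 6 → Fin n) → ℝ,
          (∑ σ : Equiv.Perm (Fin 3), ∑ τ : Equiv.Perm (Fin 3), ∑ k : Fin 6 → Fin n, g σ τ k) =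
          ∑ k : Fin 6 → Fin n, ∑ σ : Equiv.Perm (Fin 3), ∑ τ : Equiv.Perm (Fin 3), g σ τ k from
        fun g => by
          rw [show (∑ σ : Equiv.Perm (Fin 3), ∑ τ : Equiv.Perm (Fin 3), ∑ k : Fin 6 → Fin n, g σ τ k) =
              ∑ σ : Equiv.Perm (Fin 3), ∑ k : Fin 6 → Fin n, ∑ τ : Equiv.Perm (Fin 3), g σ τ k from
            Finset.sum_congr rfl fun σ _ => Finset.sum_comm]
          exact Finset.sum_comm]]
    refine Finset.sum_eq_zero fun k _ => ?_
    have hfact : (∑ σ : Equiv.Perm (Fin 3), ∑ τ : Equiv.Perm (Fin 3),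
        coeff n 6 k *
          ((((Equiv.Perm.sign σ : ℤ) : ℝ) *
              (vel x (k 0) (σ 0) * vel x (k 1) (σ 1) * vel x (k 2) (σ 2))) *
           (((Equiv.Perm.sign τ : ℤ) : ℝ) *
              (vel x (k 3) (τ 0) * vel x (k 4) (τ 1) * vel x (k 5) (τ 2))))) =
        coeff n 6 k * (detv x (k 0) (k 1) (k 2) * detv x (k 3) (k 4) (k 5)) := by
      rw [detv, detv, Finset.sum_mul_sum, Finset.mul_sum]
      refine Finset.sum_congr rfl fun σ _ => ?_
      rw [Finset.mul_sum]
    rw [hfact]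
    rcases eq_or_ne (k 0) (k 1) with h | h01
    · rw [detv_zero₁ x _ h]; ring
    rcases eq_or_ne (k 1) (k 2) with h | h12
    · rw [detv_zero₂ x _ h]; ring
    rcases eq_or_ne (k 3) (k 4) with h | h34
    · rw [detv_zero₁ x _ h]; ring
    rcases eq_or_ne (k 4) (k 5) with h | h45
    · rw [detv_zero₂ x _ h]; ring
    by_cases hm : ∀ i j : Fin 6, i ≤ j → (k i : ℕ) ≤ (k j : ℕ)
    · exfalso
      have b01 := hm 0 1 (by decide)
      have b12 := hm 1 2 (by decide)
      have b23 := hm 2 3 (by decide)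
      have b34 := hm 3 4 (by decide)
      have b45 := hm 4 5 (by decide)
      have e01 : (k 0 : ℕ) ≠ (k 1 : ℕ) := fun h => h01 (Fin.ext h)
      have e12 : (k 1 : ℕ) ≠ (k 2 : ℕ) := fun h => h12 (Fin.ext h)
      have e34 : (k 3 : ℕ) ≠ (k 4 : ℕ) := fun h => h34 (Fin.ext h)
      have e45 : (k 4 : ℕ) ≠ (k 5 : ℕ) := fun h => h45 (Fin.ext h)
      have hk5 : (k 5 : ℕ) < n := (k 5).2
      omega
    · push_neg at hm
      obtain ⟨i, j, hij, hlt⟩ := hm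
      rw [coeff_eq_zero k i j hij hlt]
      ring
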